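/- Covering the set of 1-inputs (totally disjoint tuples) of the k-party MultiDisjointness function on n-bit inputs by combinatorial boxes that contain no 0-input (totally intersecting tuple) requires at least (1 + 1/k)ⁿ boxes. -/

import Mathlib

set_option maxHeartbeats 1000000 in
/-- Covering the 1-inputs (totally disjoint tuples) of the `k`-party MultiDisjointness
function on `n`-bit inputs by combinatorial boxes containing no 0-input (totally
intersecting tuple) requires at least `(1 + 1/k)ⁿ` boxes. -/
theorem multidisjointness_cover_lower_bound (k n : ℕ) (hk : 0 < k)
    (T : ℕ) (A : Fin T → Fin k → Set (Fin n → Bool))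
    (hno : ∀ b : Fin T, ¬ ∃ x : Fin k → Fin n → Bool,
      (∀ i, x i ∈ A b i) ∧ ∃ l : Fin n, ∀ i, x i l = true)
    (hcover : ∀ x : Fin k → Fin n → Bool,
      (∀ i i' : Fin k, i ≠ i' → ∀ l : Fin n, ¬(x i l = true ∧ x i' l = true)) →
      ∃ b : Fin T, ∀ i, x i ∈ A b i) :
    (1 + 1 / (k : ℝ)) ^ n ≤ (T : ℝ) := by
  classical
  set Disj : (Fin k → Fin n → Bool) → Prop := fun x =>
    ∀ i i' : Fin k, i ≠ i' → ∀ l : Fin n, ¬(x i l = true ∧ x i' l = true) with hDisj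
  -- encoding of a 1-input
  let e : (Fin k → Fin n → Bool) → (Fin n → Option (Fin k)) := fun x l =>
    if h : ∃ i, x i l = true then some h.choose else none
  have hmem : ∀ x, Disj x → ∀ i l, (x i l = true ↔ e x l = some i) := by
    intro x hx i l
    constructor
    · intro h
      have hex : ∃ i, x i l = true := ⟨i, h⟩
      have hc := hex.choose_spec
      have : hex.choose = i := by
        by_contra hne
        exact hx _ _ hne l ⟨hc, h⟩
      simp [e, hex, this]
    · intro h
      by_cases hex : ∃ i, x i l = true
      · have : e x l = some hex.choose := by simp [e, hex]
        rw [this] at h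
        have := hex.choose_spec
        rwa [Option.some_inj.mp h] at this
      · simp [e, hex] at h
  let dec : (Fin n → Option (Fin k)) → (Fin k → Fin n → Bool) := fun g i l =>
    decide (g l = some i)
  have hdecDisj : ∀ g, Disj (dec g) := by
    intro g i i' hne l ⟨h1, h2⟩
    simp only [dec, decide_eq_true_eq] at h1 h2
    exact hne (Option.some_inj.mp (h1.symm.trans h2))
  have hedec : ∀ g, e (dec g) = g := by
    intro g
    funext l
    cases hg : g l with
    | none =>
      have hex : ¬ ∃ i, dec g i l = true := by
        rintro ⟨i, hi⟩
        simp only [dec, decide_eq_true_eq, hg] at hi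
        exact Option.some_ne_none i hi.symm
      simp [e, hex]
    | some j =>
      have hd : dec g j l = true := by simp [dec, hg]
      exact hg ▸ (hmem _ (hdecDisj g) j l).mp hd
  have hdece : ∀ x, Disj x → dec (e x) = x := by
    intro x hx
    funext i l
    cases hxl : x i l with
    | false =>
      have : ¬ (e x l = some i) := fun h => by
        have := (hmem x hx i l).mpr h; rw [hxl] at this; exact Bool.false_ne_true this
      simp [dec, this]
    | true =>
      have := (hmem x hx i l).mp hxl
      simp [dec, this]
  -- the finset of 1-inputs
  let D : Finset (Fin k → Fin n → Bool) := Finset.univ.filter Disj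
  have hcardD : D.card = (k + 1) ^ n := by
    have := Finset.card_bij' (s := D) (t := (Finset.univ : Finset (Fin n → Option (Fin k))))
      (fun x _ => e x) (fun g _ => dec g)
      (fun x hx => Finset.mem_univ _)
      (fun g hg => by
        simp only [D, Finset.mem_filter, Finset.mem_univ, true_and]
        exact hdecDisj g)
      (fun x hx => hdece x (by simpa [D] using hx))
      (fun g hg => hedec g)
    rw [this]
    simp [Fintype.card_option]
  -- each box contains at most k^n one-inputs
  have hbox : ∀ b : Fin T,
      (D.filter (fun x => ∀ i, x i ∈ A b i)).card ≤ k ^ n := by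
    intro b
    have hkey : ∀ l : Fin n, ∃ i : Fin k, ∀ y : Fin n → Bool, y ∈ A b i → y l = false := by
      intro l
      by_contra h
      push_neg at h
      have h' : ∀ i : Fin k, ∃ y ∈ A b i, y l = true := by
        intro i
        obtain ⟨y, hy, hyl⟩ := h i
        exact ⟨y, hy, by simpa using hyl⟩
      choose y hy hyl using h'
      exact hno b ⟨y, hy, l, hyl⟩
    choose il hil using hkey
    have hinj : Set.InjOn (fun x => fun l => (e x l).getD (il l))
        ↑(D.filter (fun x => ∀ i, x i ∈ A b i)) := by
      intro x hx y hy hxy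
      simp only [Finset.coe_filter, Set.mem_setOf_eq, D, Finset.mem_filter,
        Finset.mem_univ, true_and] at hx hy
      have hxne : ∀ l, e x l ≠ some (il l) := by
        intro l h
        have h1 := (hmem x hx.1 (il l) l).mpr h
        have h2 := hil l (x (il l)) (hx.2 (il l))
        rw [h2] at h1
        exact Bool.false_ne_true h1
      have hyne : ∀ l, e y l ≠ some (il l) := by
        intro l h
        have h1 := (hmem y hy.1 (il l) l).mpr h
        have h2 := hil l (y (il l)) (hy.2 (il l))
        rw [h2] at h1
        exact Bool.false_ne_true h1
      have hee : e x = e y := by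
        funext l
        have h1 := congrFun hxy l
        simp only at h1
        cases hex : e x l with
        | none =>
          cases hey : e y l with
          | none => rfl
          | some j =>
            rw [hex, hey] at h1
            simp at h1
            exact absurd (hey.trans (by rw [h1])) (hyne l)
        | some j =>
          cases hey : e y l with
          | none =>
            rw [hex, hey] at h1
            simp at h1
            exact absurd (hex.trans (by rw [h1])) (hxne l)
          | some j' =>
            rw [hex, hey] at h1
            simp at h1
            rw [h1]
      calc x = dec (e x) := (hdece x hx.1).symm
        _ = dec (e y) := by rw [hee]
        _ = y := hdece y hy.1
    have := Finset.card_le_card_of_injOn (fun x => fun l => (e x l).getD (il l))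
      (fun x _ => Finset.mem_univ _) hinj
    calc (D.filter (fun x => ∀ i, x i ∈ A b i)).card
        ≤ (Finset.univ : Finset (Fin n → Fin k)).card := this
      _ = k ^ n := by simp
  -- covering
  have hsub : D ⊆ Finset.univ.biUnion
      (fun b : Fin T => D.filter (fun x => ∀ i, x i ∈ A b i)) := by
    intro x hx
    have hxD : Disj x := by simpa [D] using hx
    obtain ⟨b, hb⟩ := hcover x hxD
    exact Finset.mem_biUnion.mpr ⟨b, Finset.mem_univ _, Finset.mem_filter.mpr ⟨hx, hb⟩⟩
  have hnat : (k + 1) ^ n ≤ T * k ^ n := by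
    calc (k + 1) ^ n = D.card := hcardD.symm
      _ ≤ (Finset.univ.biUnion
            (fun b : Fin T => D.filter (fun x => ∀ i, x i ∈ A b i))).card :=
          Finset.card_le_card hsub
      _ ≤ ∑ b : Fin T, (D.filter (fun x => ∀ i, x i ∈ A b i)).card :=
          Finset.card_biUnion_le
      _ ≤ ∑ _b : Fin T, k ^ n := Finset.sum_le_sum (fun b _ => hbox b)
      _ = T * k ^ n := by simp [Finset.sum_const, mul_comm]
  have hk' : (0 : ℝ) < k := by exact_mod_cast hk
  have heq : (1 + 1 / (k : ℝ)) = ((k : ℝ) + 1) / k := by field_simp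
  rw [heq, div_pow, div_le_iff₀ (pow_pos hk' n)]
  have : (((k + 1) ^ n : ℕ) : ℝ) ≤ ((T * k ^ n : ℕ) : ℝ) := by exact_mod_cast hnat
  push_cast at this
  linarith
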